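/- Let k ≥ 1 and let G be a balanced bipartite graph with x vertices in each vertex class. If G contains no copy of the complete bipartite graph K_{2k,2k} (with one side in each class), then G has at most 4·x^{2−1/(2k)} edges. -/
import Mathlib

open scoped Classical

open Finset

/-- Injectivity trick: functions with `f i = f j` (for `i ≠ j`) are at most `x^m` many. -/
lemma card_eq_coord_le (m x : ℕ) (i j : Fin (m + 1)) (hij : i ≠ j) :
    (univ.filter fun f : Fin (m + 1) → Fin x => f i = f j).card ≤ x ^ m := by
  have : ((univ : Finset (Fin m → Fin x))).card = x ^ m := by
    simp [Fintype.card_fun]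
  rw [← this]
  apply Finset.card_le_card_of_injOn (fun f => f ∘ j.succAbove) (fun _ _ => mem_univ _)
  intro f hf g hg hfg
  simp only [mem_coe, mem_filter] at hf hg
  funext t
  rcases eq_or_ne t j with rfl | ht
  · obtain ⟨i', hi'⟩ := Fin.exists_succAbove_eq hij
    have h1 := congrFun hfg i'
    simp only [Function.comp_apply, hi'] at h1
    rw [← hf.2, ← hg.2, h1]
  · obtain ⟨t', ht'⟩ := Fin.exists_succAbove_eq ht
    have h1 := congrFun hfg t'
    simpa [Function.comp_apply, ht'] using h1

lemma noninj_card_le (m x : ℕ) :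
    (univ.filter fun f : Fin (m + 1) → Fin x => ¬ Function.Injective f).card
      ≤ (m + 1) ^ 2 * x ^ m := by
  classical
  have hsub : (univ.filter fun f : Fin (m + 1) → Fin x => ¬ Function.Injective f)
      ⊆ (univ : Finset (Fin (m+1))).offDiag.biUnion
        (fun p => univ.filter fun f : Fin (m + 1) → Fin x => f p.1 = f p.2) := by
    intro f hf
    simp only [mem_filter, Function.Injective, not_forall] at hf
    obtain ⟨i, j, hfij, hij⟩ := hf.2
    exact mem_biUnion.2 ⟨(i, j), by simp [mem_offDiag, hij], by simp [hfij]⟩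
  calc (univ.filter fun f : Fin (m + 1) → Fin x => ¬ Function.Injective f).card
      ≤ _ := Finset.card_le_card hsub
    _ ≤ ∑ p ∈ (univ : Finset (Fin (m+1))).offDiag, (univ.filter
          fun f : Fin (m + 1) → Fin x => f p.1 = f p.2).card := Finset.card_biUnion_le
    _ ≤ ∑ _p ∈ (univ : Finset (Fin (m+1))).offDiag, x ^ m := by
        apply Finset.sum_le_sum
        intro p hp
        exact card_eq_coord_le m x p.1 p.2 (mem_offDiag.1 hp).2.2
    _ ≤ (m + 1) ^ 2 * x ^ m := by
        rw [Finset.sum_const, smul_eq_mul]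
        gcongr
        have := Finset.offDiag_card (univ : Finset (Fin (m+1)))
        simp only [Finset.card_univ, Fintype.card_fin] at this
        rw [this]; nlinarith [Nat.sub_le ((m+1)*(m+1)) (m+1)]

lemma eight_mul_sq_le_sixteen_pow (k : ℕ) : 8 * k ^ 2 ≤ 16 ^ k := by
  induction k with
  | zero => simp
  | succ n ih =>
    rcases Nat.eq_zero_or_pos n with rfl | hn
    · norm_num
    · have h2 : 8 * (n+1)^2 ≤ 16 * (8 * n^2) := by nlinarith
      calc 8 * (n+1)^2 ≤ 16 * (8 * n^2) := h2
        _ ≤ 16 * 16 ^ n := Nat.mul_le_mul_left 16 ih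
        _ = 16 ^ (n+1) := by ring

theorem stmt2 (k x : ℕ) (hk : 1 ≤ k) (G : SimpleGraph (Fin x ⊕ Fin x))
    (hbip : ∀ u v, G.Adj u v → (u.isLeft ∧ v.isRight) ∨ (u.isRight ∧ v.isLeft))
    (hfree : ¬ ∃ (S T : Finset (Fin x)), S.card = 2 * k ∧ T.card = 2 * k ∧
      ∀ a ∈ S, ∀ b ∈ T, G.Adj (Sum.inl a) (Sum.inr b)) :
    (G.edgeFinset.card : ℝ) ≤ 4 * (x : ℝ) ^ ((2 : ℝ) - 1 / (2 * k)) := by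
  classical
  obtain ⟨m, hm⟩ : ∃ m, 2 * k = m + 1 := ⟨2 * k - 1, by omega⟩
  set P : Fin x → Fin x → Prop := fun a b => G.Adj (Sum.inl a) (Sum.inr b) with hP
  set d : Fin x → ℕ := fun b => (univ.filter fun a => P a b).card with hd
  -- Step A: edge count equals sum of right-degrees
  have stepA : G.edgeFinset.card = ∑ b, d b := by
    have hL : ∀ a, G.neighborFinset (Sum.inl a)
        = (univ.filter fun b => P a b).map ⟨Sum.inr, Sum.inr_injective⟩ := by
      intro a; ext v
      cases v with
      | inl a' =>
        simp only [SimpleGraph.mem_neighborFinset, Finset.mem_map, Finset.mem_filter,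
          Finset.mem_univ, true_and, Function.Embedding.coeFn_mk]
        constructor
        · intro h
          rcases hbip _ _ h with h' | h' <;> simp at h'
        · rintro ⟨b, _, hb⟩; simp at hb
      | inr b =>
        simp [P, SimpleGraph.mem_neighborFinset]
    have hR : ∀ b, G.neighborFinset (Sum.inr b)
        = (univ.filter fun a => P a b).map ⟨Sum.inl, Sum.inl_injective⟩ := by
      intro b; ext v
      cases v with
      | inr b' =>
        simp only [SimpleGraph.mem_neighborFinset, Finset.mem_map, Finset.mem_filter,
          Finset.mem_univ, true_and, Function.Embedding.coeFn_mk]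
        constructor
        · intro h
          rcases hbip _ _ h with h' | h' <;> simp at h'
        · rintro ⟨a, _, ha⟩; simp at ha
      | inl a =>
        simp [P, SimpleGraph.mem_neighborFinset, G.adj_comm]
    have hdeg : ∑ v, G.degree v = 2 * G.edgeFinset.card :=
      G.sum_degrees_eq_twice_card_edges
    rw [Fintype.sum_sum_type] at hdeg
    have hdegL : ∀ a, G.degree (Sum.inl a) = (univ.filter fun b => P a b).card := by
      intro a
      rw [← SimpleGraph.card_neighborFinset_eq_degree, hL, Finset.card_map]
    have hdegR : ∀ b, G.degree (Sum.inr b) = d b := by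
      intro b
      rw [← SimpleGraph.card_neighborFinset_eq_degree, hR, Finset.card_map]
    have hswap : ∑ a, (univ.filter fun b => P a b).card = ∑ b, d b := by
      simp only [hd, Finset.card_filter]
      exact Finset.sum_comm
    simp only [hdegL, hdegR, hswap] at hdeg
    omega
  -- Step B: moment bound
  have stepB : ∑ b, (d b) ^ (2 * k) ≤ 8 * k ^ 2 * x ^ (2 * k) := by
    rw [hm]
    have hident : ∀ b, (d b) ^ (m + 1)
        = (univ.filter fun f : Fin (m+1) → Fin x => ∀ i, P (f i) b).card := by
      intro b
      have heq : (univ.filter fun f : Fin (m+1) → Fin x => ∀ i, P (f i) b)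
          = Fintype.piFinset (fun _ : Fin (m+1) => univ.filter fun a => P a b) := by
        ext f; simp [Fintype.mem_piFinset]
      rw [heq, Fintype.card_piFinset]
      simp [hd]
    simp only [hident]
    have hswap2 : ∑ b, (univ.filter fun f : Fin (m+1) → Fin x => ∀ i, P (f i) b).card
        = ∑ f : Fin (m+1) → Fin x, (univ.filter fun b => ∀ i, P (f i) b).card := by
      simp only [Finset.card_filter]
      exact Finset.sum_comm
    rw [hswap2]
    set c : (Fin (m+1) → Fin x) → ℕ :=
      fun f => (univ.filter fun b => ∀ i, P (f i) b).card with hc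
    have hinj : ∀ f : Fin (m+1) → Fin x, Function.Injective f → c f ≤ m := by
      intro f hf
      by_contra hcon
      push_neg at hcon
      obtain ⟨T, hTsub, hTcard⟩ := Finset.exists_subset_card_eq hcon
      refine hfree ⟨Finset.image f univ, T, ?_, ?_, ?_⟩
      · rw [Finset.card_image_of_injective _ hf, Finset.card_univ, Fintype.card_fin, hm]
      · rw [hTcard, hm]
      · intro a ha b hb
        obtain ⟨i, _, rfl⟩ := Finset.mem_image.1 ha
        have := hTsub hb
        rw [Finset.mem_filter] at this
        exact this.2 i
    have hnoninj : ∀ f : Fin (m+1) → Fin x, c f ≤ x := by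
      intro f
      calc c f ≤ (univ : Finset (Fin x)).card := Finset.card_filter_le _ _
        _ = x := by simp
    calc ∑ f : Fin (m+1) → Fin x, c f
        = ∑ f ∈ univ.filter (fun f : Fin (m+1) → Fin x => Function.Injective f), c f
          + ∑ f ∈ univ.filter (fun f : Fin (m+1) → Fin x => ¬ Function.Injective f), c f :=
          (Finset.sum_filter_add_sum_filter_not _ _ _).symm
      _ ≤ ∑ _f ∈ univ.filter (fun f : Fin (m+1) → Fin x => Function.Injective f), m
          + ∑ _f ∈ univ.filter (fun f : Fin (m+1) → Fin x => ¬ Function.Injective f), x := by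
          gcongr with f hf f hf
          · exact hinj f (Finset.mem_filter.1 hf).2
          · exact hnoninj f
      _ = (univ.filter fun f : Fin (m+1) → Fin x => Function.Injective f).card * m
          + (univ.filter fun f : Fin (m+1) → Fin x => ¬ Function.Injective f).card * x := by
          simp [Finset.sum_const, smul_eq_mul]
      _ ≤ x ^ (m+1) * m + ((m+1)^2 * x ^ m) * x := by
          gcongr
          · calc (univ.filter fun f : Fin (m+1) → Fin x => Function.Injective f).card
                ≤ (univ : Finset (Fin (m+1) → Fin x)).card := Finset.card_filter_le _ _
              _ = x ^ (m+1) := by simp [Fintype.card_fun]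
          · exact noninj_card_le m x
      _ ≤ 8 * k ^ 2 * x ^ (m+1) := by
          have h1 : m + (m+1)^2 ≤ 8 * k^2 := by nlinarith [hm, hk]
          calc x ^ (m+1) * m + ((m+1)^2 * x ^ m) * x = (m + (m+1)^2) * x ^ (m+1) := by
                rw [pow_succ]; ring
            _ ≤ 8 * k^2 * x ^ (m+1) := Nat.mul_le_mul_right _ h1
  -- Step C + D: real arithmetic
  have h16 : (8 : ℕ) * k ^ 2 ≤ 16 ^ k := eight_mul_sq_le_sixteen_pow k
  rcases Nat.eq_zero_or_pos x with rfl | hx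
  · have : G.edgeFinset.card = 0 := by
      rw [stepA]; simp
    rw [this]
    push_cast
    positivity
  · have hxR : (0:ℝ) < (x:ℝ) := by exact_mod_cast hx
    have hkR : (1:ℝ) ≤ (k:ℝ) := by exact_mod_cast hk
    set E : ℝ := (G.edgeFinset.card : ℝ) with hE
    have hEsum : E = ∑ b, (d b : ℝ) := by rw [hE, stepA]; push_cast; rfl
    have hB : ∑ b, (d b : ℝ) ^ (2*k) ≤ 8 * (k:ℝ)^2 * (x:ℝ)^(2*k) := by
      have := stepB
      have hcast : ((∑ b, (d b) ^ (2*k) : ℕ) : ℝ) ≤ ((8 * k ^ 2 * x ^ (2 * k) : ℕ) : ℝ) := by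
        exact_mod_cast this
      push_cast at hcast
      exact hcast
    have hjensen := pow_sum_div_card_le_sum_pow
        (s := (univ : Finset (Fin x))) (f := fun b => (d b : ℝ))
        (fun i _ => by positivity) m
    simp only [Finset.card_univ, Fintype.card_fin] at hjensen
    rw [div_le_iff₀ (by positivity)] at hjensen
    rw [← hm] at hjensen
    rw [← hEsum] at hjensen
    have h1 : E ^ (2*k) ≤ (16:ℝ)^k * (x:ℝ)^(4*k-1 : ℕ) := by
      calc E ^ (2*k) ≤ (∑ b, (d b : ℝ) ^ (2*k)) * (x:ℝ)^m := hjensen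
        _ ≤ (8 * (k:ℝ)^2 * (x:ℝ)^(2*k)) * (x:ℝ)^m := by
            gcongr
        _ = (8 * (k:ℝ)^2) * (x:ℝ)^(4*k-1 : ℕ) := by
            rw [mul_assoc, ← pow_add]
            congr 2
            omega
        _ ≤ (16:ℝ)^k * (x:ℝ)^(4*k-1 : ℕ) := by
            have h8 : (8 * (k:ℝ)^2) ≤ (16:ℝ)^k := by
              have : ((8 * k^2 : ℕ):ℝ) ≤ ((16^k : ℕ):ℝ) := by exact_mod_cast h16
              push_cast at this
              linarith
            exact mul_le_mul_of_nonneg_right h8 (by positivity)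
    have hrw : (4 * (x:ℝ) ^ ((2 : ℝ) - 1 / (2 * k))) ^ (2*k)
        = (16:ℝ)^k * (x:ℝ)^(4*k-1 : ℕ) := by
      rw [mul_pow]
      congr 1
      · rw [pow_mul]
        norm_num
      · rw [← Real.rpow_natCast ((x:ℝ) ^ ((2 : ℝ) - 1 / (2 * k))) (2*k),
          ← Real.rpow_mul (le_of_lt hxR), ← Real.rpow_natCast (x:ℝ) (4*k-1)]
        congr 1
        have hk0 : (k:ℝ) ≠ 0 := by linarith
        have hcast : ((4*k-1 : ℕ) : ℝ) = 4*(k:ℝ) - 1 := by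
          have : (1:ℕ) ≤ 4*k := by omega
          push_cast [this]
          ring
        rw [hcast]
        push_cast
        field_simp
        ring
    refine le_of_pow_le_pow_left₀ (n := 2*k) (by omega) (by positivity) ?_
    rw [hrw]
    exact h1
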